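/- Let U ⊆ V be an open set with U + γ = U (a γ-open set) and let x₀ be a boundary point of U. Then there exist an open neighborhood V' of x₀, an open subset W of V, a homeomorphism φ : V' → W such that both φ and φ⁻¹ are Lipschitz (with respect to any norm on V), and a nonzero linear functional ℓ on V, such that φ(V' ∩ U) = W ∩ {x ∈ V | ℓ(x) > 0}. -/

import Mathlib

open Set Pointwise

/-- A cone in a real vector space: contains `0` and is stable under multiplication by
positive scalars. -/
def IsConeSet {V : Type*} [AddCommGroup V] [Module ℝ V] (c : Set V) : Prop :=
  0 ∈ c ∧ ∀ t : ℝ, 0 < t → ∀ x ∈ c, t • x ∈ c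

theorem gammaOpen_biLipschitz_straightening {V : Type*} [NormedAddCommGroup V]
    [NormedSpace ℝ V] [FiniteDimensional ℝ V] (γ : Set V)
    (hcone : IsConeSet γ) (hclosed : IsClosed γ) (hconv : Convex ℝ γ)
    (hproper : γ ∩ (-γ) = {0}) (hint : (interior γ).Nonempty)
    (U : Set V) (hUopen : IsOpen U) (hUinv : U + γ = U)
    (x₀ : V) (hx₀ : x₀ ∈ frontier U) :
    ∃ (V' W' : Set V) (φ ψ : V → V) (K : NNReal) (ℓ : V →ₗ[ℝ] ℝ),
      IsOpen V' ∧ x₀ ∈ V' ∧ IsOpen W' ∧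
      Set.BijOn φ V' W' ∧
      LipschitzOnWith K φ V' ∧ LipschitzOnWith K ψ W' ∧
      (∀ x ∈ V', ψ (φ x) = x) ∧ (∀ y ∈ W', φ (ψ y) = y) ∧
      ℓ ≠ 0 ∧ φ '' (V' ∩ U) = W' ∩ {x | 0 < ℓ x} := by
  classical
  -- frontier facts
  have hx₀cl : x₀ ∈ closure U := hx₀.1
  have hx₀nU : x₀ ∉ U := by
    have h := hx₀.2
    rwa [hUopen.interior_eq] at h
  obtain ⟨a, ha⟩ : U.Nonempty := closure_nonempty_iff.1 ⟨x₀, hx₀cl⟩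
  obtain ⟨e, he⟩ := hint
  obtain ⟨ε, hε, hball⟩ := Metric.isOpen_iff.1 isOpen_interior e he
  have hball' : Metric.ball e ε ⊆ γ := hball.trans interior_subset
  have heγ : e ∈ γ := interior_subset he
  have hUadd : ∀ x ∈ U, ∀ y ∈ γ, x + y ∈ U := by
    intro x hx y hy
    have h := add_mem_add hx hy
    rwa [hUinv] at h
  -- scaled ball membership in the cone
  have hγscale : ∀ t : ℝ, 0 < t → ∀ w : V, ‖w‖ < t * ε → t • e + w ∈ γ := by
    intro t ht w hw
    have h1 : e + t⁻¹ • w ∈ Metric.ball e ε := by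
      rw [Metric.mem_ball, dist_eq_norm]
      have h2 : e + t⁻¹ • w - e = t⁻¹ • w := by abel
      rw [h2, norm_smul, norm_inv, Real.norm_eq_abs, abs_of_pos ht, inv_mul_lt_iff₀ ht]
      linarith [hw]
    have h3 := hcone.2 t ht _ (hball' h1)
    rwa [smul_add, smul_inv_smul₀ (ne_of_gt ht)] at h3
  -- e ≠ 0
  have he0 : e ≠ 0 := by
    intro h
    apply hx₀nU
    have hmem : x₀ - a ∈ γ := by
      have ht : (0:ℝ) < ‖x₀ - a‖ / ε + 1 := by positivity
      have hw : ‖x₀ - a‖ < (‖x₀ - a‖ / ε + 1) * ε := by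
        rw [add_mul, div_mul_cancel₀ _ (ne_of_gt hε)]
        linarith
      have := hγscale _ ht (x₀ - a) hw
      simpa [h] using this
    have := hUadd a ha _ hmem
    simpa using this
  -- the linear functional
  obtain ⟨g0, hg0norm, hg0e⟩ := exists_dual_vector ℝ e (norm_ne_zero_iff.2 he0)
  set ℓC : V →L[ℝ] ℝ := ‖e‖⁻¹ • g0 with hℓC
  have hℓCe : ℓC e = 1 := by
    have h1 : g0 e = ‖e‖ := by exact_mod_cast hg0e
    simp [hℓC, h1, inv_mul_cancel₀ (norm_ne_zero_iff.2 he0)]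
  -- the sections and the boundary function
  set S : V → Set ℝ := fun x => {t : ℝ | x + t • e ∈ U} with hSdef
  have hstrong : ∀ x ∈ U, ∀ t : ℝ, 0 < t → ∀ w : V, ‖w‖ < t * ε → x + t • e + w ∈ U := by
    intro x hx t ht w hw
    have h := hUadd x hx _ (hγscale t ht w hw)
    rwa [← add_assoc] at h
  have hup : ∀ x ∈ U, ∀ t : ℝ, 0 ≤ t → x + t • e ∈ U := by
    intro x hx t ht
    rcases eq_or_lt_of_le ht with h | h
    · simpa [← h] using hx
    · exact hUadd x hx _ (hcone.2 t h e heγ)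
  have hSne : ∀ x : V, (S x).Nonempty := by
    intro x
    refine ⟨‖x - a‖ / ε + 1, ?_⟩
    have ht : (0:ℝ) < ‖x - a‖ / ε + 1 := by positivity
    have hw : ‖x - a‖ < (‖x - a‖ / ε + 1) * ε := by
      rw [add_mul, div_mul_cancel₀ _ (ne_of_gt hε)]
      linarith
    have h := hstrong a ha _ ht (x - a) hw
    have h2 : a + (‖x - a‖ / ε + 1) • e + (x - a) = x + (‖x - a‖ / ε + 1) • e := by abel
    rw [h2] at h
    exact h
  have hSlb : ∀ x : V, ∀ t ∈ S x, -(‖x₀ - x‖ / ε) - 1 ≤ t := by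
    intro x t ht
    by_contra hcon
    push_neg at hcon
    apply hx₀nU
    have hs : (0:ℝ) < -t := by
      have : (0:ℝ) ≤ ‖x₀ - x‖ / ε := by positivity
      linarith
    have hw : ‖x₀ - x‖ < (-t) * ε := by
      have h1 : ‖x₀ - x‖ / ε + 1 < -t := by linarith
      have h2 : (‖x₀ - x‖ / ε + 1) * ε < (-t) * ε := by
        exact mul_lt_mul_of_pos_right h1 hε
      rw [add_mul, div_mul_cancel₀ _ (ne_of_gt hε)] at h2
      linarith
    have h := hstrong _ ht _ hs (x₀ - x) hw
    have h2 : x + t • e + (-t) • e + (x₀ - x) = x₀ := by module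
    rwa [h2] at h
  have hSbdd : ∀ x : V, BddBelow (S x) := fun x => ⟨_, fun t ht => hSlb x t ht⟩
  set g : V → ℝ := fun x => sInf (S x) with hgdef
  have hmem_iff : ∀ (x : V) (t : ℝ), x + t • e ∈ U ↔ g x < t := by
    intro x t
    constructor
    · intro h
      obtain ⟨r, hr, hball2⟩ := Metric.isOpen_iff.1 hUopen _ h
      have hepos : (0:ℝ) < ‖e‖ := norm_pos_iff.2 he0
      set δ : ℝ := r / (2 * ‖e‖) with hδ
      have hδpos : 0 < δ := by positivity
      have h2 : x + (t - δ) • e ∈ U := by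
        apply hball2
        rw [Metric.mem_ball, dist_eq_norm]
        have h3 : x + (t - δ) • e - (x + t • e) = (-δ) • e := by module
        rw [h3, norm_smul, Real.norm_eq_abs, abs_neg, abs_of_pos hδpos]
        have h4 : δ * ‖e‖ = r / 2 := by
          rw [hδ]; field_simp
        rw [h4]
        linarith
      have hle : g x ≤ t - δ := csInf_le (hSbdd x) h2
      linarith
    · intro h
      obtain ⟨s, hs, hst⟩ := exists_lt_of_csInf_lt (hSne x) h
      have h2 := hup _ hs (t - s) (by linarith)
      have h3 : x + s • e + (t - s) • e = x + t • e := by module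
      rwa [h3] at h2
  have hUiff : ∀ x : V, x ∈ U ↔ g x < 0 := by
    intro x
    have := hmem_iff x 0
    simpa using this
  have hgtr : ∀ (x : V) (s : ℝ), g (x + s • e) = g x - s := by
    intro x s
    apply eq_of_forall_gt_iff
    intro t
    have h1 : g (x + s • e) < t ↔ x + s • e + t • e ∈ U := (hmem_iff _ t).symm
    have h2 : x + s • e + t • e = x + (s + t) • e := by module
    rw [h1, h2, hmem_iff]
    constructor
    · intro h; linarith
    · intro h; linarith
  -- Lipschitz estimate for g
  have hgLip : ∀ x y : V, g y ≤ g x + ‖y - x‖ / ε := by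
    intro x y
    by_contra hcon
    push_neg at hcon
    set d : ℝ := ‖y - x‖ / ε with hd
    have hd0 : 0 ≤ d := by positivity
    set t : ℝ := (g x + g y - d) / 2 with htdef
    have ht1 : g x < t := by rw [htdef]; linarith
    have hxe : x + t • e ∈ U := (hmem_iff x t).2 ht1
    set s : ℝ := g y - t with hsdef
    have hsd : d < s := by rw [hsdef, htdef]; linarith
    have hs0 : 0 < s := by linarith
    have hw : ‖y - x‖ < s * ε := by
      have h1 : d * ε < s * ε := mul_lt_mul_of_pos_right hsd hε
      rw [hd, div_mul_cancel₀ _ (ne_of_gt hε)] at h1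
      exact h1
    have h := hstrong _ hxe _ hs0 (y - x) hw
    have h2 : x + t • e + s • e + (y - x) = y + (t + s) • e := by module
    rw [h2] at h
    have h3 := (hmem_iff y (t + s)).1 h
    have h4 : t + s = g y := by rw [hsdef]; ring
    rw [h4] at h3
    exact lt_irrefl _ h3
  have hgLip' : ∀ x y : V, |g x - g y| ≤ ‖x - y‖ / ε := by
    intro x y
    rw [abs_le]
    constructor
    · have := hgLip x y
      rw [norm_sub_rev] at this
      linarith
    · have := hgLip y x
      linarith
  -- the straightening maps
  set c : V → ℝ := fun x => ℓC x + g x with hcdef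
  set φ : V → V := fun x => x - c x • e with hφdef
  set ψ : V → V := fun y => y + c y • e with hψdef
  have hcinv : ∀ (x : V) (s : ℝ), c (x + s • e) = c x := by
    intro x s
    simp only [hcdef, map_add, map_smul, hgtr, hℓCe, smul_eq_mul]
    ring
  have hcφ : ∀ x : V, c (φ x) = c x := by
    intro x
    have h : φ x = x + (-(c x)) • e := by simp only [hφdef]; module
    rw [h, hcinv]
  have hcψ : ∀ y : V, c (ψ y) = c y := by
    intro y
    simp only [hψdef]
    exact hcinv y (c y)
  have hψφ : ∀ x : V, ψ (φ x) = x := by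
    intro x
    show φ x + c (φ x) • e = x
    rw [hcφ]
    simp only [hφdef]
    module
  have hφψ : ∀ y : V, φ (ψ y) = y := by
    intro y
    show ψ y - c (ψ y) • e = y
    rw [hcψ]
    simp only [hψdef]
    module
  have hℓφ : ∀ x : V, ℓC (φ x) = -(g x) := by
    intro x
    simp only [hφdef, hcdef, map_sub, map_smul, hℓCe, smul_eq_mul, mul_one]
    ring
  -- image identity
  have himg : φ '' U = {y : V | 0 < ℓC y} := by
    ext y
    constructor
    · rintro ⟨x, hx, rfl⟩
      have h1 := (hUiff x).1 hx
      have h2 := hℓφ x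
      simp only [mem_setOf_eq, h2]
      linarith
    · intro hy
      refine ⟨ψ y, ?_, hφψ y⟩
      rw [hUiff]
      have h1 : ℓC (φ (ψ y)) = -(g (ψ y)) := hℓφ _
      rw [hφψ y] at h1
      simp only [mem_setOf_eq] at hy
      linarith
  -- Lipschitz constant
  have hcLip : ∀ x y : V, |c x - c y| ≤ (‖ℓC‖ + ε⁻¹) * ‖x - y‖ := by
    intro x y
    have h1 : c x - c y = ℓC (x - y) + (g x - g y) := by
      simp only [hcdef, map_sub]; ring
    rw [h1]
    have h2 : |ℓC (x - y)| ≤ ‖ℓC‖ * ‖x - y‖ := by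
      have := ℓC.le_opNorm (x - y)
      rwa [Real.norm_eq_abs] at this
    have h3 := hgLip' x y
    have h4 : ‖x - y‖ / ε = ε⁻¹ * ‖x - y‖ := by rw [div_eq_inv_mul]
    rw [h4] at h3
    calc |ℓC (x - y) + (g x - g y)| ≤ |ℓC (x - y)| + |g x - g y| := abs_add_le _ _
      _ ≤ ‖ℓC‖ * ‖x - y‖ + ε⁻¹ * ‖x - y‖ := by linarith
      _ = (‖ℓC‖ + ε⁻¹) * ‖x - y‖ := by ring
  set Kr : ℝ := 1 + ‖e‖ * (‖ℓC‖ + ε⁻¹) with hKr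
  have hKr0 : 0 ≤ Kr := by positivity
  set K : NNReal := Kr.toNNReal with hK
  have hKcoe : (K : ℝ) = Kr := Real.coe_toNNReal _ hKr0
  have key : ∀ (s : ℝ), |s| = 1 → ∀ x y : V,
      ‖(x + (s * c x) • e) - (y + (s * c y) • e)‖ ≤ Kr * ‖x - y‖ := by
    intro s hs x y
    have hc' := hcLip x y
    have hcc : |c x - c y| * ‖e‖ ≤ (‖ℓC‖ + ε⁻¹) * ‖x - y‖ * ‖e‖ :=
      mul_le_mul_of_nonneg_right hc' (norm_nonneg e)
    have h1 : (x + (s * c x) • e) - (y + (s * c y) • e) = (x - y) + (s * (c x - c y)) • e := by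
      module
    rw [h1]
    calc ‖(x - y) + (s * (c x - c y)) • e‖ ≤ ‖x - y‖ + ‖(s * (c x - c y)) • e‖ :=
          norm_add_le _ _
      _ = ‖x - y‖ + |c x - c y| * ‖e‖ := by
          rw [norm_smul, Real.norm_eq_abs, abs_mul, hs, one_mul]
      _ ≤ ‖x - y‖ + (‖ℓC‖ + ε⁻¹) * ‖x - y‖ * ‖e‖ := by linarith
      _ = Kr * ‖x - y‖ := by rw [hKr]; ring
  have hφLip : LipschitzWith K φ := by
    apply LipschitzWith.of_dist_le_mul
    intro x y
    rw [dist_eq_norm, dist_eq_norm, hKcoe]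
    have h := key (-1) (by norm_num) x y
    have h2 : ∀ z : V, z + ((-1 : ℝ) * c z) • e = φ z := by
      intro z; simp only [hφdef]; module
    rwa [h2 x, h2 y] at h
  have hψLip : LipschitzWith K ψ := by
    apply LipschitzWith.of_dist_le_mul
    intro x y
    rw [dist_eq_norm, dist_eq_norm, hKcoe]
    have h := key 1 (by norm_num) x y
    have h2 : ∀ z : V, z + ((1 : ℝ) * c z) • e = ψ z := by
      intro z; simp only [hψdef]; module
    rwa [h2 x, h2 y] at h
  -- assemble
  refine ⟨univ, univ, φ, ψ, K, ℓC.toLinearMap, isOpen_univ, mem_univ _, isOpen_univ,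
    ⟨fun x _ => mem_univ _, fun x _ y _ hxy => ?_, fun y _ => ⟨ψ y, mem_univ _, hφψ y⟩⟩,
    hφLip.lipschitzOnWith, hψLip.lipschitzOnWith,
    fun x _ => hψφ x, fun y _ => hφψ y, ?_, ?_⟩
  · have := congrArg ψ hxy
    rwa [hψφ, hψφ] at this
  · intro h
    have h1 : ℓC.toLinearMap e = 1 := hℓCe
    rw [h] at h1
    simp at h1
  · rw [univ_inter, univ_inter, himg]
    rfl
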